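/- arXiv:0801.0499 — 3 statements merged into one kernel-verified Lean document; each statement's English description precedes it below -/
import Mathlib

section
/- Let θ ∼ N(0,1) be a 'fixed' effect and Y|θ ∼ N(θ,1), with selection S_Ω = {y : y ≥ 0}. The fixed-effect selection-adjusted posterior density π_S(θ|y) ∝ φ(θ)·φ(y−θ)/Φ(θ) is stochastically smaller than the unadjusted posterior N(y/2,1/2); equivalently, since Pr(Y ≥ 0|θ) = Φ(θ) is strictly increasing in θ, the likelihood ratio π_S(θ|y)/π(θ|y) ∝ 1/Φ(θ) is strictly decreasing in θ. -/
open MeasureTheory Real Set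

/-- Fixed effect θ ~ N(0,1), Y|θ ~ N(θ,1), selection S_Ω = {y ≥ 0}. The fixed-effect
selection-adjusted posterior density `π_S(θ|y) ∝ φ(θ)φ(y−θ)/Φ(θ)` is stochastically
smaller than the unadjusted posterior (∝ φ(θ)φ(y−θ), i.e. N(y/2,1/2)); equivalently,
since `Pr(Y ≥ 0|θ) = Φ(θ)` is strictly increasing, the ratio of the two posterior
densities is strictly decreasing in θ. -/
theorem fixed_effect_adjusted_posterior_stochastically_smaller
    (y : ℝ)
    (φ : ℝ → ℝ) (hφ : ∀ x, φ x = Real.exp (-(x ^ 2) / 2) / Real.sqrt (2 * π))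
    (Φ : ℝ → ℝ) (hΦ : ∀ x, Φ x = ∫ t in Set.Iic x, φ t ∂volume)
    (C : ℝ) (hC : C = ∫ θ, φ θ * φ (y - θ) ∂volume)
    (CS : ℝ) (hCS : CS = ∫ θ, φ θ * φ (y - θ) / Φ θ ∂volume) :
    StrictMono Φ ∧
    StrictAnti (fun θ : ℝ =>
      (φ θ * φ (y - θ) / Φ θ / CS) / (φ θ * φ (y - θ) / C)) ∧
    ∀ t : ℝ, ∫ θ in Set.Iic t, φ θ * φ (y - θ) / C ∂volume ≤
      ∫ θ in Set.Iic t, φ θ * φ (y - θ) / Φ θ / CS ∂volume := by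
  have hs : (0:ℝ) < Real.sqrt (2 * π) := Real.sqrt_pos.2 (by positivity)
  have φpos : ∀ x, 0 < φ x := fun x => by rw [hφ]; positivity
  have φnonneg : ∀ x, 0 ≤ φ x := fun x => (φpos x).le
  have φcont : Continuous φ := by
    have : Continuous fun x : ℝ => Real.exp (-(x ^ 2) / 2) / Real.sqrt (2 * π) := by
      fun_prop
    exact this.congr fun x => (hφ x).symm
  have φint : Integrable φ := by
    have h1 : Integrable (fun x : ℝ => Real.exp (-(1/2 : ℝ) * x ^ 2)) :=
      integrable_exp_neg_mul_sq (by norm_num)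
    exact (h1.div_const (Real.sqrt (2 * π))).congr
      (Filter.Eventually.of_forall fun x => by
        rw [hφ x, show -(x ^ 2) / 2 = -(1/2 : ℝ) * x ^ 2 from by ring])
  have Φmono : Monotone Φ := by
    intro a b hab
    rw [hΦ, hΦ]
    exact setIntegral_mono_set φint.integrableOn
      (Filter.Eventually.of_forall fun x => φnonneg x)
      (HasSubset.Subset.eventuallyLE (Iic_subset_Iic.2 hab))
  have hsupp : Function.support φ = univ := by
    ext x; simp [Function.support, (φpos x).ne']
  have ΦstrictMono : StrictMono Φ := by
    intro a b hab
    have hpos : 0 < ∫ x in Ioc a b, φ x := by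
      rw [setIntegral_pos_iff_support_of_nonneg_ae
        (Filter.Eventually.of_forall φnonneg) φint.integrableOn]
      rw [hsupp, univ_inter, Real.volume_Ioc]
      simp [hab]
    have hsplit : Φ b = Φ a + ∫ x in Ioc a b, φ x := by
      rw [hΦ, hΦ, ← setIntegral_union (Iic_disjoint_Ioc le_rfl) measurableSet_Ioc
        φint.integrableOn φint.integrableOn, Iic_union_Ioc_eq_Iic hab.le]
    rw [hsplit]; linarith
  have Φpos : ∀ x, 0 < Φ x := by
    intro x
    have h0 : 0 ≤ Φ (x - 1) := by
      rw [hΦ]; exact setIntegral_nonneg measurableSet_Iic fun t _ => φnonneg t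
    linarith [ΦstrictMono (show x - 1 < x by linarith)]
  -- lower bound on Φ for nonpositive arguments
  have Φlb : ∀ x : ℝ, x ≤ 0 → φ (x - 1) ≤ Φ x := by
    intro x hx
    have h1 : φ (x - 1) = ∫ _ in Ioc (x-1) x, φ (x - 1) := by
      rw [setIntegral_const, Real.volume_real_Ioc, smul_eq_mul]
      norm_num
    have h2 : (∫ _ in Ioc (x-1) x, φ (x - 1)) ≤ ∫ t in Ioc (x-1) x, φ t := by
      apply setIntegral_mono_on
        (integrableOn_const (by rw [Real.volume_Ioc]; exact ENNReal.ofReal_ne_top))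
        φint.integrableOn measurableSet_Ioc
      intro t ht
      rw [hφ, hφ]
      apply (div_le_div_iff_of_pos_right hs).2
      apply Real.exp_le_exp.2
      nlinarith [ht.1, ht.2, hx]
    have h3 : (∫ t in Ioc (x-1) x, φ t) ≤ Φ x := by
      rw [hΦ]
      exact setIntegral_mono_set φint.integrableOn
        (Filter.Eventually.of_forall fun t => φnonneg t)
        (HasSubset.Subset.eventuallyLE Ioc_subset_Iic_self)
    linarith
  -- facts about g θ = φ θ * φ (y - θ)
  have gpos : ∀ θ : ℝ, 0 < φ θ * φ (y - θ) := fun θ => mul_pos (φpos θ) (φpos _)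
  have gcont : Continuous fun θ : ℝ => φ θ * φ (y - θ) :=
    φcont.mul (φcont.comp (by fun_prop))
  have φle : ∀ x, φ x ≤ 1 / Real.sqrt (2 * π) := by
    intro x
    rw [hφ]
    apply (div_le_div_iff_of_pos_right hs).2
    calc Real.exp (-(x ^ 2) / 2) ≤ Real.exp 0 := by
          apply Real.exp_le_exp.2; nlinarith [sq_nonneg x]
      _ = 1 := Real.exp_zero
  have gint : Integrable (fun θ : ℝ => φ θ * φ (y - θ)) := by
    apply Integrable.mono' (φint.mul_const (1 / Real.sqrt (2 * π)))
      gcont.aestronglyMeasurable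
    apply Filter.Eventually.of_forall
    intro θ
    rw [Real.norm_eq_abs, abs_of_nonneg (gpos θ).le]
    exact mul_le_mul_of_nonneg_left (φle _) (φnonneg θ)
  have hmeas : AEStronglyMeasurable (fun θ : ℝ => φ θ * φ (y - θ) / Φ θ) volume :=
    (gcont.measurable.div Φmono.measurable).aestronglyMeasurable
  -- exact computation of g θ / φ (θ - 1)
  have hexp : ∀ θ : ℝ, φ θ * φ (y - θ) / φ (θ - 1)
      = Real.exp ((1 - y^2 + (y-1)^2)/2) / Real.sqrt (2 * π)
        * Real.exp (-(1/2 : ℝ) * (θ - (y-1))^2) := by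
    intro θ
    rw [hφ, hφ, hφ]
    have l1 : Real.exp (-(θ^2)/2) / Real.sqrt (2*π) * (Real.exp (-((y-θ)^2)/2) / Real.sqrt (2*π))
        / (Real.exp (-((θ-1)^2)/2) / Real.sqrt (2*π))
        = Real.exp (-(θ^2)/2 + -((y-θ)^2)/2 - -((θ-1)^2)/2) / Real.sqrt (2*π) := by
      rw [Real.exp_sub, Real.exp_add]
      field_simp
    rw [l1, div_mul_eq_mul_div, ← Real.exp_add]
    congr 2
    ring
  -- integrable bound for the adjusted density
  set c : ℝ := Real.exp ((1 - y^2 + (y-1)^2)/2) / Real.sqrt (2 * π) with hc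
  have cpos : 0 < c := by rw [hc]; positivity
  have hBint : Integrable (fun θ : ℝ =>
      c * Real.exp (-(1/2 : ℝ) * (θ - (y-1))^2) + (1 / φ (-1)) * (φ θ * φ (y - θ))) := by
    have h1 : Integrable (fun x : ℝ => Real.exp (-(1/2 : ℝ) * x ^ 2)) :=
      integrable_exp_neg_mul_sq (by norm_num)
    exact ((h1.comp_sub_right (y-1)).const_mul c).add (gint.const_mul _)
  have hle : ∀ θ : ℝ, ‖φ θ * φ (y - θ) / Φ θ‖ ≤
      c * Real.exp (-(1/2 : ℝ) * (θ - (y-1))^2) + (1 / φ (-1)) * (φ θ * φ (y - θ)) := by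
    intro θ
    have hnn : 0 ≤ φ θ * φ (y - θ) / Φ θ := le_of_lt (div_pos (gpos θ) (Φpos θ))
    rw [Real.norm_eq_abs, abs_of_nonneg hnn]
    rcases le_or_gt θ 0 with h | h
    · have h1 : φ θ * φ (y - θ) / Φ θ ≤ φ θ * φ (y - θ) / φ (θ - 1) := by
        gcongr
        · exact (gpos θ).le
        · exact φpos _
        · exact Φlb θ h
      rw [hexp θ] at h1
      have h2 : 0 ≤ (1 / φ (-1)) * (φ θ * φ (y - θ)) :=
        mul_nonneg (div_nonneg zero_le_one (φnonneg _)) (gpos θ).le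
      rw [hc]
      linarith
    · have hΦ01 : φ (-1) ≤ Φ 0 := by
        have := Φlb 0 le_rfl
        norm_num at this
        exact this
      have hΦge : φ (-1) ≤ Φ θ := hΦ01.trans (Φmono h.le)
      have h1 : φ θ * φ (y - θ) / Φ θ ≤ φ θ * φ (y - θ) / φ (-1) := by
        gcongr
        · exact (gpos θ).le
        · exact φpos _
      have h2 : 0 ≤ c * Real.exp (-(1/2 : ℝ) * (θ - (y-1))^2) := by positivity
      have heq : φ θ * φ (y - θ) / φ (-1) = 1 / φ (-1) * (φ θ * φ (y - θ)) := by
        ring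
      rw [heq] at h1
      linarith
  have hSint : Integrable (fun θ : ℝ => φ θ * φ (y - θ) / Φ θ) :=
    Integrable.mono' hBint hmeas (Filter.Eventually.of_forall hle)
  -- positivity of the normalizing constants
  have Cpos : 0 < C := by
    rw [hC, integral_pos_iff_support_of_nonneg (fun θ => (gpos θ).le) gint]
    have : Function.support (fun θ : ℝ => φ θ * φ (y - θ)) = univ := by
      ext θ
      simp only [Function.mem_support, mem_univ, iff_true]
      exact (gpos θ).ne'
    rw [this]
    simp [Real.volume_univ]
  have CSpos : 0 < CS := by
    rw [hCS, integral_pos_iff_support_of_nonneg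
      (fun θ => le_of_lt (div_pos (gpos θ) (Φpos θ))) hSint]
    have : Function.support (fun θ : ℝ => φ θ * φ (y - θ) / Φ θ) = univ := by
      ext θ
      simp only [Function.mem_support, mem_univ, iff_true]
      exact (div_pos (gpos θ) (Φpos θ)).ne'
    rw [this]
    simp [Real.volume_univ]
  refine ⟨ΦstrictMono, ?_, ?_⟩
  · -- strict antitonicity of the density ratio
    have hratio : ∀ θ : ℝ,
        (φ θ * φ (y - θ) / Φ θ / CS) / (φ θ * φ (y - θ) / C) = C / (CS * Φ θ) := by
      intro θ
      have h1 := (gpos θ).ne'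
      have h2 := (Φpos θ).ne'
      have h3 := (φpos θ).ne'
      have h4 := (φpos (y - θ)).ne'
      field_simp
    intro a b hab
    simp only [hratio]
    exact div_lt_div_of_pos_left Cpos (mul_pos CSpos (Φpos a))
      (mul_lt_mul_of_pos_left (ΦstrictMono hab) CSpos)
  · -- stochastic dominance
    intro t
    have Φtpos := Φpos t
    set A1 := ∫ θ in Iic t, φ θ * φ (y - θ) with hA1
    set A2 := ∫ θ in Ioi t, φ θ * φ (y - θ) with hA2
    set B1 := ∫ θ in Iic t, φ θ * φ (y - θ) / Φ θ with hB1
    set B2 := ∫ θ in Ioi t, φ θ * φ (y - θ) / Φ θ with hB2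
    have hC' : C = A1 + A2 := by
      rw [hC, ← setIntegral_univ, ← Set.Iic_union_Ioi (a := t),
        setIntegral_union (Iic_disjoint_Ioi le_rfl) measurableSet_Ioi
          gint.integrableOn gint.integrableOn]
    have hCS' : CS = B1 + B2 := by
      rw [hCS, ← setIntegral_univ, ← Set.Iic_union_Ioi (a := t),
        setIntegral_union (Iic_disjoint_Ioi le_rfl) measurableSet_Ioi
          hSint.integrableOn hSint.integrableOn]
    have hA1nn : 0 ≤ A1 := setIntegral_nonneg measurableSet_Iic fun θ _ => (gpos θ).le
    have hA2nn : 0 ≤ A2 := setIntegral_nonneg measurableSet_Ioi fun θ _ => (gpos θ).le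
    have hB1nn : 0 ≤ B1 := setIntegral_nonneg measurableSet_Iic
      fun θ _ => le_of_lt (div_pos (gpos θ) (Φpos θ))
    have hB2nn : 0 ≤ B2 := setIntegral_nonneg measurableSet_Ioi
      fun θ _ => le_of_lt (div_pos (gpos θ) (Φpos θ))
    have hB2le : B2 ≤ A2 / Φ t := by
      have h1 : B2 ≤ ∫ θ in Ioi t, φ θ * φ (y - θ) / Φ t := by
        apply setIntegral_mono_on hSint.integrableOn
          (gint.div_const (Φ t)).integrableOn measurableSet_Ioi
        intro θ hθ
        gcongr
        · exact (gpos θ).le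
        · exact Φmono (le_of_lt hθ)
      rwa [integral_div] at h1
    have hB1ge : A1 / Φ t ≤ B1 := by
      have h1 : (∫ θ in Iic t, φ θ * φ (y - θ) / Φ t) ≤ B1 := by
        apply setIntegral_mono_on (gint.div_const (Φ t)).integrableOn
          hSint.integrableOn measurableSet_Iic
        intro θ hθ
        gcongr
        · exact (gpos θ).le
        · exact Φpos θ
        · exact Φmono hθ
      rwa [integral_div] at h1
    rw [integral_div, integral_div, ← hA1, ← hB1, div_le_div_iff₀ Cpos CSpos]
    have k1 : B2 * Φ t ≤ A2 := by rwa [← le_div_iff₀ Φtpos]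
    have k2 : A1 ≤ B1 * Φ t := by rwa [← div_le_iff₀ Φtpos]
    have k3 : A1 * B2 ≤ B1 * A2 := by
      calc A1 * B2 ≤ (B1 * Φ t) * B2 := mul_le_mul_of_nonneg_right k2 hB2nn
        _ = B1 * (B2 * Φ t) := by ring
        _ ≤ B1 * A2 := mul_le_mul_of_nonneg_left k1 hB1nn
    rw [hC', hCS']
    nlinarith
end

section
/- (Corollary 2, Neyman–Pearson type) Let ρ̃(y) ∈ [0,1] and m̃(y) be a probability density on Ω. Among all measurable selection rules S ⊆ Ω with ∫_S m̃(y)dy > 0 and the same weighted average r(S) = ∫_S ρ̃(y)m̃(y)dy / ∫_S m̃(y)dy, the rule S* = {y : ρ̃(y) ≤ s} maximizes the selection probability ∫_S m̃(y)dy: i.e., if r(S) ≤ r(S*) then ∫_S m̃(y)dy ≤ ∫_{S*} m̃(y)dy, under the assumption that ρ̃ takes the value exactly s only on a m̃-null set or with appropriate tie-handling. -/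
open MeasureTheory

/-- Corollary 2 (Neyman–Pearson type): among measurable selection rules S with
positive selection probability under the marginal density m̃, the threshold rule
S* = {y : ρ̃(y) ≤ s} maximizes the selection probability among rules whose
saBayes risk r(S) = ∫_S ρ̃ m̃ / ∫_S m̃ is at most r(S*), assuming ties
{ρ̃ = s} are m̃-null. -/
theorem threshold_rule_maximizes_selection_probability
    {Ω : Type*} [MeasurableSpace Ω] (μ : Measure Ω)
    (ρ : Ω → ℝ) (hρ_meas : Measurable ρ) (hρ0 : ∀ y, 0 ≤ ρ y) (hρ1 : ∀ y, ρ y ≤ 1)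
    (mt : Ω → ℝ) (hmt_nonneg : ∀ y, 0 ≤ mt y) (hmt_prob : ∫ y, mt y ∂μ = 1)
    (hmt_int : Integrable mt μ) (hρmt_int : Integrable (fun y => ρ y * mt y) μ)
    (s : ℝ) (hs0 : 0 ≤ s) (hs1 : s ≤ 1)
    (hties : ∫ y in {y | ρ y = s}, mt y ∂μ = 0)
    (hSstar_pos : 0 < ∫ y in {y | ρ y ≤ s}, mt y ∂μ)
    (S : Set Ω) (hS : MeasurableSet S)
    (hS_pos : 0 < ∫ y in S, mt y ∂μ)
    (hrisk : (∫ y in S, ρ y * mt y ∂μ) / (∫ y in S, mt y ∂μ) ≤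
      (∫ y in {y | ρ y ≤ s}, ρ y * mt y ∂μ) / (∫ y in {y | ρ y ≤ s}, mt y ∂μ)) :
    ∫ y in S, mt y ∂μ ≤ ∫ y in {y | ρ y ≤ s}, mt y ∂μ := by
  set Sstar : Set Ω := {y | ρ y ≤ s} with hSstar_def
  have hSstar_meas : MeasurableSet Sstar := measurableSet_le hρ_meas measurable_const
  set f : Ω → ℝ := fun y => (ρ y - s) * mt y with hf_def
  have hf_eq : f = fun y => ρ y * mt y - s * mt y := by funext y; simp [hf_def]; ring
  have hf_int : Integrable f μ := by
    rw [hf_eq]; exact hρmt_int.sub (hmt_int.const_mul s)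
  -- key inequality: ∫_{S*} f ≤ ∫_S f
  have h1 : ∫ y in S ∩ Sstar, f y ∂μ + ∫ y in S \ Sstar, f y ∂μ = ∫ y in S, f y ∂μ :=
    integral_inter_add_diff hSstar_meas hf_int.integrableOn
  have h2 : ∫ y in Sstar ∩ S, f y ∂μ + ∫ y in Sstar \ S, f y ∂μ = ∫ y in Sstar, f y ∂μ :=
    integral_inter_add_diff hS hf_int.integrableOn
  have hpos : 0 ≤ ∫ y in S \ Sstar, f y ∂μ := by
    apply setIntegral_nonneg (hS.diff hSstar_meas)
    intro y hy
    have : s < ρ y := lt_of_not_ge hy.2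
    have := hmt_nonneg y
    simp only [hf_def]
    nlinarith
  have hneg : ∫ y in Sstar \ S, f y ∂μ ≤ 0 := by
    apply setIntegral_nonpos (hSstar_meas.diff hS)
    intro y hy
    have : ρ y ≤ s := hy.1
    have := hmt_nonneg y
    simp only [hf_def]
    nlinarith
  have hcomm : S ∩ Sstar = Sstar ∩ S := Set.inter_comm _ _
  have hK : ∫ y in Sstar, f y ∂μ ≤ ∫ y in S, f y ∂μ := by
    rw [← h1, ← h2, hcomm]; linarith
  -- strict negativity of ∫_{S*} f
  have hstar_nonpos : ∫ y in Sstar, f y ∂μ ≤ 0 := by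
    apply setIntegral_nonpos hSstar_meas
    intro y hy
    have : ρ y ≤ s := hy
    have := hmt_nonneg y
    simp only [hf_def]
    nlinarith
  have hstar_neg : ∫ y in Sstar, f y ∂μ < 0 := by
    rcases lt_or_eq_of_le hstar_nonpos with h | h
    · exact h
    -- suppose ∫_{S*} f = 0; then mt vanishes a.e. on {ρ < s}, so A* = 0, contradiction
    exfalso
    have hg_int : Integrable (fun y => (s - ρ y) * mt y) (μ.restrict Sstar) := by
      have : (fun y => (s - ρ y) * mt y) = fun y => -f y := by
        funext y; simp [hf_def]; ring
      rw [this]; exact hf_int.integrableOn.neg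
    have hg_nonneg : 0 ≤ᵐ[μ.restrict Sstar] fun y => (s - ρ y) * mt y := by
      filter_upwards [ae_restrict_mem hSstar_meas] with y hy
      have : ρ y ≤ s := hy
      have := hmt_nonneg y
      show (0:ℝ) ≤ (s - ρ y) * mt y
      nlinarith
    have hneg_eq : (fun y => (s - ρ y) * mt y) = fun y => -f y := by
      funext y; simp only [hf_def]; ring
    have hg_zero : ∫ y in Sstar, (s - ρ y) * mt y ∂μ = 0 := by
      rw [hneg_eq, integral_neg, h, neg_zero]
    have hg_ae : (fun y => (s - ρ y) * mt y) =ᵐ[μ.restrict Sstar] 0 :=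
      (integral_eq_zero_iff_of_nonneg_ae hg_nonneg hg_int).mp hg_zero
    have hsubset : {y | ρ y < s} ⊆ Sstar := fun y hy => show ρ y ≤ s from le_of_lt hy
    have hlt_meas : MeasurableSet {y | ρ y < s} := measurableSet_lt hρ_meas measurable_const
    have hg_ae' : (fun y => (s - ρ y) * mt y) =ᵐ[μ.restrict {y | ρ y < s}] 0 :=
      ae_restrict_of_ae_restrict_of_subset hsubset hg_ae
    have hmt_ae : mt =ᵐ[μ.restrict {y | ρ y < s}] 0 := by
      filter_upwards [hg_ae', ae_restrict_mem hlt_meas] with y hy hy'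
      have hlt : ρ y < s := hy'
      have : (s - ρ y) * mt y = 0 := hy
      have hne : s - ρ y ≠ 0 := by linarith
      have := mul_eq_zero.mp this
      tauto
    have hlt_zero : ∫ y in {y | ρ y < s}, mt y ∂μ = 0 := integral_eq_zero_of_ae hmt_ae
    have hsplit : Sstar = {y | ρ y < s} ∪ {y | ρ y = s} := by
      ext y; simp only [hSstar_def, Set.mem_setOf_eq, Set.mem_union]
      exact le_iff_lt_or_eq
    have hdisj : Disjoint {y | ρ y < s} {y | ρ y = s} := by
      rw [Set.disjoint_left]
      intro y hy hy'
      exact absurd hy' (ne_of_lt hy)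
    have heq_meas : MeasurableSet {y | ρ y = s} := hρ_meas (measurableSet_singleton s)
    have : ∫ y in Sstar, mt y ∂μ =
        ∫ y in {y | ρ y < s}, mt y ∂μ + ∫ y in {y | ρ y = s}, mt y ∂μ := by
      rw [hsplit]
      exact setIntegral_union hdisj heq_meas hmt_int.integrableOn hmt_int.integrableOn
    rw [hlt_zero, hties] at this
    simp only [add_zero] at this
    rw [this] at hSstar_pos
    exact lt_irrefl 0 hSstar_pos
  -- rewrite ∫ f over a set as ∫ ρ mt - s ∫ mt
  have hsplitf : ∀ T : Set Ω, ∫ y in T, f y ∂μ =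
      (∫ y in T, ρ y * mt y ∂μ) - s * ∫ y in T, mt y ∂μ := by
    intro T
    rw [hf_eq, integral_sub hρmt_int.integrableOn ((hmt_int.const_mul s).integrableOn)]
    congr 1
    exact integral_const_mul s mt
  rw [hsplitf S, hsplitf Sstar] at hK
  rw [hsplitf Sstar] at hstar_neg
  set A : ℝ := ∫ y in S, mt y ∂μ
  set Astar : ℝ := ∫ y in Sstar, mt y ∂μ
  set I : ℝ := ∫ y in S, ρ y * mt y ∂μ
  set Istar : ℝ := ∫ y in Sstar, ρ y * mt y ∂μ
  have hcross : I * Astar ≤ Istar * A := by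
    rw [div_le_div_iff₀ hS_pos hSstar_pos] at hrisk
    exact hrisk
  nlinarith [mul_le_mul_of_nonneg_right hK (le_of_lt hSstar_pos)]
end

section
/- In the two-group mixture model, the pFDR equals the conditional expectation of the local FDR over the rejection region: Pr(H = 0 | Y ∈ Γ) = E[fdr(Y) | Y ∈ Γ], where fdr(y) = π₀f₀(y)/(π₀f₀(y) + (1−π₀)f₁(y)) is the conditional probability that H = 0 given Y = y. -/
open MeasureTheory

/-- In the two-group mixture model, the pFDR equals the conditional expectation of the
local FDR over the rejection region:
Pr(H = 0 | Y ∈ Γ) = E[fdr(Y) | Y ∈ Γ], where fdr(y) = π₀f₀(y)/m(y) and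
m(y) = π₀f₀(y) + (1−π₀)f₁(y) is the marginal density of Y. -/
theorem pFDR_eq_conditional_expectation_of_local_fdr
    {Ω : Type*} [MeasurableSpace Ω] (μ : Measure Ω)
    (π₀ : ℝ) (hπ₀ : 0 < π₀) (hπ₀' : π₀ < 1)
    (f₀ f₁ : Ω → ℝ)
    (hf₀_nonneg : ∀ y, 0 ≤ f₀ y) (hf₀_prob : ∫ y, f₀ y ∂μ = 1)
    (hf₁_nonneg : ∀ y, 0 ≤ f₁ y) (hf₁_prob : ∫ y, f₁ y ∂μ = 1)
    (mY : Ω → ℝ) (hmY : ∀ y, mY y = π₀ * f₀ y + (1 - π₀) * f₁ y)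
    (hmY_pos : ∀ y, 0 < mY y)
    (fdr : Ω → ℝ) (hfdr : ∀ y, fdr y = π₀ * f₀ y / mY y)
    (Γ : Set Ω) (hΓ : MeasurableSet Γ)
    (hpos : 0 < ∫ y in Γ, mY y ∂μ) :
    π₀ * (∫ y in Γ, f₀ y ∂μ) / (∫ y in Γ, mY y ∂μ) =
      (∫ y in Γ, fdr y * mY y ∂μ) / (∫ y in Γ, mY y ∂μ) := by
  have h : ∀ y, fdr y * mY y = π₀ * f₀ y := fun y => by
    rw [hfdr y, div_mul_cancel₀ _ (hmY_pos y).ne']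
  rw [show (∫ y in Γ, fdr y * mY y ∂μ) = ∫ y in Γ, π₀ * f₀ y ∂μ from
      integral_congr_ae (Filter.Eventually.of_forall fun y => h y),
    integral_const_mul, mul_div_assoc]
end
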